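/- Let G be a connected twin-free bipartite graph of order n ≥ 2. Then imax(G) ≥ ⌈n/2⌉ + 1. -/

import Mathlib

open SimpleGraph

/-- `s` is an independent set in `G`. -/
def IsIndep {V : Type*} (G : SimpleGraph V) (s : Set V) : Prop :=
  ∀ ⦃u⦄, u ∈ s → ∀ ⦃v⦄, v ∈ s → ¬ G.Adj u v

/-- `s` is a maximal independent set in `G`. -/
def IsMaxIndep {V : Type*} (G : SimpleGraph V) (s : Set V) : Prop :=
  IsIndep G s ∧ ∀ t : Set V, IsIndep G t → s ⊆ t → s = t

/-- The number of maximal independent sets of `G`. -/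
noncomputable def imax {V : Type*} (G : SimpleGraph V) : ℕ :=
  Set.ncard {s : Set V | IsMaxIndep G s}

/-- `G` is twin-free: no two distinct vertices have the same open neighbourhood. -/
def TwinFree {V : Type*} (G : SimpleGraph V) : Prop :=
  ∀ u v : V, G.neighborSet u = G.neighborSet v → u = v

lemma exists_maximal_indep {V : Type*} (G : SimpleGraph V) (s : Set V) (hs : IsIndep G s) :
    ∃ m, s ⊆ m ∧ IsMaxIndep G m := by
  obtain ⟨m, hsm, hmax⟩ := zorn_subset_nonempty {t : Set V | IsIndep G t}
    (fun c hcS hchain _ => by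
      refine ⟨⋃₀ c, ?_, fun t ht => Set.subset_sUnion_of_mem ht⟩
      intro u hu v hv hadj
      obtain ⟨t1, ht1, hu1⟩ := hu
      obtain ⟨t2, ht2, hv2⟩ := hv
      rcases eq_or_ne t1 t2 with rfl | hne
      · exact hcS ht1 hu1 hv2 hadj
      · rcases hchain ht1 ht2 hne with h | h
        · exact hcS ht2 (h hu1) hv2 hadj
        · exact hcS ht1 hu1 (h hv2) hadj) s hs
  exact ⟨m, hsm, hmax.1, fun t ht hmt => (hmax.2 ht hmt).antisymm hmt |>.symm⟩

lemma fin2_eq {x y : Fin 2} (hx : x ≠ 0) (hy : y ≠ 0) : x = y := by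
  revert hx hy; revert x y; decide

lemma side_count {V : Type*} [Fintype V] (G : SimpleGraph V) (htf : TwinFree G)
    (P : Set V) (hP : IsIndep G P) (hQ : IsMaxIndep G Pᶜ) :
    P.ncard + 1 ≤ imax G := by
  classical
  -- for each a ∈ P, extend `insert a (Pᶜ \ N(a))` to a maximal independent set
  have hind : ∀ a ∈ P, IsIndep G (insert a (Pᶜ \ G.neighborSet a)) := by
    intro a ha u hu v hv hadj
    rcases hu with rfl | ⟨hu1, hu2⟩
    · rcases hv with rfl | ⟨hv1, hv2⟩
      · exact G.irrefl hadj
      · exact hv2 hadj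
    · rcases hv with rfl | ⟨hv1, hv2⟩
      · exact hu2 (G.adj_symm hadj)
      · exact hQ.1 hu1 hv1 hadj
  choose! f hf1 hf2 using fun a (ha : a ∈ P) =>
    exists_maximal_indep G _ (hind a ha)
  have hmem : ∀ a ∈ P, a ∈ f a := fun a ha => hf1 a ha (Set.mem_insert _ _)
  have hinj : Set.InjOn f P := by
    intro a ha a' ha' hEq
    apply htf
    ext x
    simp only [mem_neighborSet]
    constructor
    · intro hx
      by_contra hx'
      have hxQ : x ∈ Pᶜ := fun hxP => hP hxP ha (G.adj_symm hx)
      have : x ∈ f a' := hf1 a' ha' (Set.mem_insert_of_mem _ ⟨hxQ, hx'⟩)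
      exact (hf2 a ha).1 (hmem a ha) (hEq ▸ this) hx
    · intro hx
      by_contra hx'
      have hxQ : x ∈ Pᶜ := fun hxP => hP hxP ha' (G.adj_symm hx)
      have : x ∈ f a := hf1 a ha (Set.mem_insert_of_mem _ ⟨hxQ, hx'⟩)
      exact (hf2 a' ha').1 (hmem a' ha') (hEq ▸ this) hx
  have hne : Pᶜ ∉ f '' P := by
    rintro ⟨a, ha, hEq⟩
    exact (hEq ▸ hmem a ha) ha
  have hsub : insert Pᶜ (f '' P) ⊆ {s : Set V | IsMaxIndep G s} := by
    rintro s (rfl | ⟨a, ha, rfl⟩)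
    · exact hQ
    · exact hf2 a ha
  calc P.ncard + 1 = (insert Pᶜ (f '' P)).ncard := by
        rw [Set.ncard_insert_of_notMem hne (Set.toFinite _),
          Set.ncard_image_of_injOn hinj]
      _ ≤ imax G := Set.ncard_le_ncard hsub (Set.toFinite _)

theorem stmt_8 {V : Type*} [Fintype V] (G : SimpleGraph V)
    (hconn : G.Connected) (htf : TwinFree G) (hbip : G.Colorable 2)
    (hn : 2 ≤ Fintype.card V) :
    (Fintype.card V + 1) / 2 + 1 ≤ imax G := by
  classical
  obtain ⟨c⟩ := hbip
  set P : Set V := {v | c v = 0} with hPdef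
  -- every vertex has a neighbor
  have hnb : ∀ v : V, ∃ w, G.Adj v w := by
    intro v
    obtain ⟨u, hu⟩ := Fintype.exists_ne_of_one_lt_card (by omega) v
    obtain ⟨w⟩ := hconn v u
    cases w with
    | nil => exact absurd rfl (Ne.symm hu)
    | cons h p => exact ⟨_, h⟩
  -- membership facts
  have hPc : ∀ v, v ∈ Pᶜ ↔ c v ≠ 0 := fun v => Iff.rfl
  have hPind : IsIndep G P := by
    intro u hu v hv hadj
    exact c.valid hadj (hu.trans hv.symm)
  have hQind : IsIndep G Pᶜ := by
    intro u hu v hv hadj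
    exact c.valid hadj (fin2_eq hu hv)
  -- adjacency flips side
  have hflip : ∀ {u v}, G.Adj u v → (u ∈ P ↔ v ∈ Pᶜ) := by
    intro u v hadj
    constructor
    · intro hu hv; exact c.valid hadj (hu.trans hv.symm)
    · intro hv
      by_contra hu
      exact c.valid hadj (fin2_eq hu hv)
  have hPmax : IsMaxIndep G P := by
    refine ⟨hPind, fun t ht hPt => ?_⟩
    refine hPt.antisymm fun x hx => ?_
    by_contra hxP
    obtain ⟨y, hy⟩ := hnb x
    have hyP : y ∈ P := by
      by_contra hyP
      exact hxP ((hflip hy).mpr hyP)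
    exact ht hx (hPt hyP) hy
  have hQmax : IsMaxIndep G Pᶜ := by
    refine ⟨hQind, fun t ht hPt => ?_⟩
    refine hPt.antisymm fun x hx => ?_
    by_contra hxQ
    have hxP : x ∈ P := not_not.mp hxQ
    obtain ⟨y, hy⟩ := hnb x
    have hyQ : y ∈ Pᶜ := (hflip hy).mp hxP
    exact ht hx (hPt hyQ) hy
  have h1 : P.ncard + 1 ≤ imax G := side_count G htf P hPind hQmax
  have h2 : Pᶜ.ncard + 1 ≤ imax G := by
    have := side_count G htf Pᶜ hQind (by rw [compl_compl]; exact hPmax)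
    exact this
  have hcard : P.ncard + Pᶜ.ncard = Fintype.card V := by
    rw [Set.ncard_add_ncard_compl, Nat.card_eq_fintype_card]
  omega
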